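/- Let R = 3, B = {0, 1, 3}, L = {0, 1}. Then (R, B, L) forms a Riesz sequence triple (the vectors e_{3,0} = (1/√3)(1,1,1) and e_{3,1} = (1/√3)(1, e^{2πi/3}, 1) are linearly independent in ℂ³), but for every integer λ ∈ ℤ ∖ L, the triple (R, B, L ∪ {λ}) does not form a Riesz sequence triple: the three vectors e_{3,0}, e_{3,1}, e_{3,λ} are linearly dependent in ℂ³. -/

import Mathlib

open Complex

noncomputable section

/-- The vector `e_{3,λ} = (1/√3)(e^{2πi·0·λ/3}, e^{2πi·1·λ/3}, e^{2πi·3·λ/3}) ∈ ℂ³`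
for the digit set `B = {0,1,3}` and `R = 3`. -/
def v013 (lam : ℤ) : Fin 3 → ℂ :=
  fun i =>
    ((Real.sqrt 3 : ℂ))⁻¹ *
      Complex.exp (2 * Real.pi * Complex.I * ((![0, 1, 3] i : ℤ) : ℂ) * (lam : ℂ) / 3)

lemma sqrt3_ne : (Real.sqrt 3 : ℂ) ≠ 0 := by
  simp only [ne_eq, Complex.ofReal_eq_zero]
  positivity

lemma v013_eq (lam : ℤ) : v013 lam = fun i =>
    (Real.sqrt 3 : ℂ)⁻¹ * ![1, Complex.exp (2 * Real.pi * Complex.I * lam / 3), 1] i := by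
  funext i
  fin_cases i
  · simp [v013]
  · simp [v013]
  · have h : (2 * (Real.pi:ℂ) * Complex.I * (3:ℂ) * (lam : ℂ) / 3)
        = (lam : ℂ) * (2 * Real.pi * Complex.I) := by ring
    simp [v013, h, Complex.exp_int_mul_two_pi_mul_I]

lemma omega_ne_one : Complex.exp (2 * Real.pi * Complex.I / 3) ≠ 1 := by
  intro h
  rw [Complex.exp_eq_one_iff] at h
  obtain ⟨n, hn⟩ := h
  have hne : (2 * (Real.pi : ℂ) * Complex.I) ≠ 0 := by
    simp [Real.pi_ne_zero, Complex.I_ne_zero]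
  have h2 : (2 * (Real.pi : ℂ) * Complex.I) * 1 = (2 * (Real.pi : ℂ) * Complex.I) * (3 * n) := by
    linear_combination 3 * hn
  have h1 : (1 : ℂ) = 3 * n := mul_left_cancel₀ hne h2
  have : (1 : ℤ) = 3 * n := by exact_mod_cast h1
  omega

/-- `(3, {0,1,3}, {0,1})` is a Riesz sequence triple (`e_{3,0}, e_{3,1}` are linearly
independent), but no integer `λ ∉ {0,1}` can be added: `e_{3,0}, e_{3,1}, e_{3,λ}` are
always linearly dependent in `ℂ³`. -/
theorem example_013_riesz_triple_not_extendable :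
    LinearIndependent ℂ ![v013 0, v013 1] ∧
      ∀ lam : ℤ, lam ∉ ({0, 1} : Set ℤ) →
        ¬ LinearIndependent ℂ ![v013 0, v013 1, v013 lam] := by
  have hcne : ((Real.sqrt 3 : ℂ))⁻¹ ≠ 0 := inv_ne_zero sqrt3_ne
  constructor
  · rw [linearIndependent_fin2]
    constructor
    · intro h
      simp only [Matrix.cons_val_one, Matrix.head_cons] at h
      have h0 := congrFun h 0
      rw [v013_eq] at h0
      simp at h0
    · intro a h
      simp only [Matrix.cons_val_one, Matrix.head_cons, Matrix.cons_val_zero] at h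
      have h0 := congrFun h 0
      have h1 := congrFun h 1
      rw [v013_eq, v013_eq] at h0 h1
      simp only [Pi.smul_apply, smul_eq_mul, Matrix.cons_val_zero, Matrix.cons_val_one,
        Matrix.head_cons] at h0 h1
      have ha : a = 1 := mul_right_cancel₀ hcne (by linear_combination h0)
      rw [ha, one_mul] at h1
      norm_num at h1
      exact omega_ne_one h1
  · intro lam _
    have hωne : Complex.exp (2 * Real.pi * Complex.I / 3) - 1 ≠ 0 :=
      sub_ne_zero.mpr omega_ne_one
    obtain ⟨b, hb⟩ : ∃ b : ℂ, b * (Complex.exp (2 * Real.pi * Complex.I / 3) - 1)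
        = Complex.exp (2 * Real.pi * Complex.I * (lam : ℂ) / 3) - 1 :=
      ⟨_, div_mul_cancel₀ _ hωne⟩
    rw [Fintype.not_linearIndependent_iff]
    refine ⟨![1 - b, b, -1], ?_, ⟨2, by norm_num [Matrix.cons_val_two, Matrix.tail_cons, Matrix.head_cons]⟩⟩
    funext i
    simp only [Fin.sum_univ_three, Matrix.cons_val_zero, Matrix.cons_val_one, Matrix.head_cons,
      Matrix.cons_val_two, Matrix.tail_cons, Pi.add_apply, Pi.smul_apply, smul_eq_mul,
      Pi.zero_apply]
    rw [v013_eq, v013_eq, v013_eq]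
    fin_cases i <;> norm_num <;>
      first
        | ring1
        | linear_combination (Real.sqrt 3 : ℂ)⁻¹ * hb
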